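/- (Euler trace formula) Let φ(x) = a_n x^n + ... + a_0 ∈ C[x] have n distinct roots x_1,...,x_n, and let h = p/q be a rational function with q(x_i) ≠ 0 for all i. Let r(x) = b_{n-1}x^{n-1} + ... + b_0 be the unique polynomial of degree < n agreeing with φ'(x)h(x) at all roots of φ. Then Σ_{i=1}^n h(x_i) = b_{n-1}/a_n. -/

import Mathlib

open Polynomial

theorem euler_trace_formula (n : ℕ) (φ : Polynomial ℂ)
    (hdeg : φ.degree = (n : WithBot ℕ)) (x : Fin n → ℂ) (hx : Function.Injective x)
    (hroots : ∀ i, φ.eval (x i) = 0)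
    (p q : Polynomial ℂ) (hq : ∀ i, q.eval (x i) ≠ 0)
    (r : Polynomial ℂ) (hrdeg : r.degree < (n : WithBot ℕ))
    (hr : ∀ i, r.eval (x i) =
      (Polynomial.derivative φ).eval (x i) * (p.eval (x i) / q.eval (x i))) :
    ∑ i, p.eval (x i) / q.eval (x i) = r.coeff (n - 1) / φ.leadingCoeff := by
  classical
  rcases Nat.eq_zero_or_pos n with hn | hn
  · subst hn
    have hr0 : r = 0 := by
      have : r.degree < 0 := by simpa using hrdeg
      exact degree_eq_bot.mp (Nat.WithBot.lt_zero_iff.mp this)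
    simp [hr0]
  have hφ0 : φ ≠ 0 := fun h => by simp [h] at hdeg
  have hlc : φ.leadingCoeff ≠ 0 := leadingCoeff_ne_zero.mpr hφ0
  set s : Finset (Fin n) := Finset.univ with hs
  have hinj : Set.InjOn x s := fun a _ b _ h => hx h
  have hcard : s.card = n := by simp [hs]
  -- φ = C lc * nodal
  have hdegN : (C φ.leadingCoeff * Lagrange.nodal s x).degree = φ.degree := by
    rw [degree_C_mul hlc, Lagrange.degree_nodal, hdeg, hcard]
  have hlcN : (C φ.leadingCoeff * Lagrange.nodal s x).leadingCoeff = φ.leadingCoeff := by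
    rw [leadingCoeff_mul, leadingCoeff_C, (Lagrange.nodal_monic).leadingCoeff, mul_one]
  have hN : φ = C φ.leadingCoeff * Lagrange.nodal s x := by
    apply Polynomial.eq_of_degree_sub_lt_of_eval_index_eq s hinj
    · calc (φ - C φ.leadingCoeff * Lagrange.nodal s x).degree < φ.degree :=
            degree_sub_lt hdegN.symm hφ0 hlcN.symm
        _ = (s.card : WithBot ℕ) := by rw [hdeg, hcard]
    · intro i _
      rw [hroots i, eval_mul, Lagrange.eval_nodal_at_node (Finset.mem_univ i), mul_zero]
  -- derivative values
  set w : Fin n → ℂ := fun i => Lagrange.nodalWeight s x i with hwdef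
  have hwne : ∀ i, w i ≠ 0 := fun i => Lagrange.nodalWeight_ne_zero hinj (Finset.mem_univ i)
  have hderiv : ∀ i, (Polynomial.derivative φ).eval (x i) = φ.leadingCoeff * (w i)⁻¹ := by
    intro i
    have h1 : w i = (eval (x i) (Polynomial.derivative (Lagrange.nodal s x)))⁻¹ :=
      Lagrange.nodalWeight_eq_eval_derivative_nodal (Finset.mem_univ i)
    have h2 : eval (x i) (Polynomial.derivative (Lagrange.nodal s x)) = (w i)⁻¹ := by
      rw [h1, inv_inv]
    conv_lhs => rw [hN]
    rw [derivative_C_mul, eval_mul, eval_C, h2]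
  -- r as interpolation
  have hrint : r = Lagrange.interpolate s x (fun i => r.eval (x i)) :=
    Lagrange.eq_interpolate hinj (by rw [hcard]; exact hrdeg)
  have hbasis : ∀ i : Fin n, (Lagrange.basis s x i).coeff (n - 1) = w i := by
    intro i
    have hb : Lagrange.basis s x i = C (w i) * Lagrange.nodal (s.erase i) x := by
      rw [Lagrange.basis_eq_prod_sub_inv_mul_nodal_div (Finset.mem_univ i),
        ← Lagrange.nodal_erase_eq_nodal_div (Finset.mem_univ i)]
    have hdn : (Lagrange.nodal (s.erase i) x).natDegree = n - 1 := by
      rw [Lagrange.natDegree_nodal, Finset.card_erase_of_mem (Finset.mem_univ i), hcard]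
    rw [hb, coeff_C_mul, ← hdn, (Lagrange.nodal_monic).coeff_natDegree, mul_one]
  have hcoeff : r.coeff (n - 1) = ∑ i, r.eval (x i) * w i := by
    conv_lhs => rw [hrint]
    rw [Lagrange.interpolate_apply, finset_sum_coeff]
    exact Finset.sum_congr rfl fun i _ => by rw [coeff_C_mul, hbasis i]
  rw [hcoeff]
  have : ∀ i, r.eval (x i) * w i = φ.leadingCoeff * (p.eval (x i) / q.eval (x i)) := by
    intro i
    rw [hr i, hderiv i]
    field_simp [hwne i]
  rw [Finset.sum_congr rfl fun i _ => this i, ← Finset.mul_sum,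
    mul_div_cancel_left₀ _ hlc]
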